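/- Let λ, Γ ∈ ℝ, T ∈ (0,∞], and let u, m : ℝ × ℝ → ℝ, where m is continuously differentiable and ∂_x u is continuous, and suppose m satisfies ∂_t m + (u+Γ)∂_x m + 2(∂_x u) m + λ m = ∂_x(h∘u) for all (t,x) ∈ [0,T) × ℝ. Fix x ∈ ℝ and let q : [0,T) → ℝ be differentiable with q(0) = x and q'(t) = u(t, q(t)) + Γ, and let w : [0,T) → ℝ be differentiable with w(0) = 1 and w'(t) = (∂_x u)(t, q(t)) · w(t), and assume s ↦ e^{λs} w(s)² ∂_x(h∘u)(s, q(s)) is continuous. Then for every t ∈ [0,T): m(t, q(t)) · w(t)² = m(0,x) e^{-λ t} + ∫₀ᵗ e^{λ(s-t)} w(s)² ∂_x(h∘u)(s, q(s)) ds. -/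

import Mathlib

open Filter intervalIntegral

/-- The half-open time interval `[0, T)` for `T ∈ (0, ∞]`, as a set of reals. -/
def timeInterval (T : EReal) : Set ℝ := {t : ℝ | 0 ≤ t ∧ (t : EReal) < T}

/-- The nonlinearity `h(z) = (α+Γ)z + (β/3)z³ + (γ/4)z⁴` of the dissipative
Camassa–Holm-type equation in nonlocal form. -/
noncomputable def hfun (α β γ Γ : ℝ) : ℝ → ℝ := fun z =>
  (α + Γ) * z + (β / 3) * z ^ 3 + (γ / 4) * z ^ 4

/-- the representation formula (4.0.4) of Theorem 5.2 of the paper: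
`m(t,q(t)) w(t)² = m₀(x) e^{-λt} + ∫₀ᵗ e^{λ(s-t)} w(s)² ∂_x(h∘u)(s,q(s)) ds`
along the flow `q' = u(t,q) + Γ`, `q(0) = x`, with `w = q_x`, `w(0) = 1`. -/
theorem stmt_19 (lam α β γ Γ : ℝ) (T : EReal) (hT : 0 < T) (u ux m : ℝ → ℝ → ℝ)
    (hm : ContDiff ℝ 1 (Function.uncurry m))
    (hux : ∀ t x : ℝ, HasDerivAt (u t) (ux t x) x)
    (huxc : Continuous (Function.uncurry ux))
    (heq : ∀ t ∈ timeInterval T, ∀ x : ℝ,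
      deriv (fun s => m s x) t + (u t x + Γ) * deriv (m t) x
          + 2 * ux t x * m t x + lam * m t x
        = deriv (fun y => hfun α β γ Γ (u t y)) x)
    (x : ℝ) (q w : ℝ → ℝ) (hq0 : q 0 = x) (hw0 : w 0 = 1)
    (hq : ∀ t ∈ timeInterval T, HasDerivWithinAt q (u t (q t) + Γ) (timeInterval T) t)
    (hw : ∀ t ∈ timeInterval T, HasDerivWithinAt w (ux t (q t) * w t) (timeInterval T) t)
    (hcont : ContinuousOn
      (fun s => Real.exp (lam * s) * (w s) ^ 2
        * deriv (fun y => hfun α β γ Γ (u s y)) (q s)) (timeInterval T)) :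
    ∀ t ∈ timeInterval T,
      m t (q t) * (w t) ^ 2
        = m 0 x * Real.exp (-lam * t)
          + ∫ s in (0 : ℝ)..t,
              Real.exp (lam * (s - t)) * (w s) ^ 2
                * deriv (fun y => hfun α β γ Γ (u s y)) (q s) := by
  intro t ht
  set D : ℝ → ℝ := fun s => deriv (fun y => hfun α β γ Γ (u s y)) (q s) with hDdef
  set S : Set ℝ := timeInterval T with hSdef
  set F : ℝ → ℝ := fun s => Real.exp (lam * s) * (m s (q s) * (w s) ^ 2) with hFdef
  -- derivative of F within S
  have hF : ∀ s ∈ S, HasDerivWithinAt F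
      (Real.exp (lam * s) * (w s) ^ 2 * D s) S s := by
    intro s hs
    set f := fderiv ℝ (Function.uncurry m) (s, q s) with hfdef
    have hmd : HasFDerivAt (Function.uncurry m) f (s, q s) :=
      (hm.differentiable one_ne_zero (s, q s)).hasFDerivAt
    have hpair : HasDerivWithinAt (fun τ => (τ, q τ))
        ((1 : ℝ), u s (q s) + Γ) S s :=
      HasDerivWithinAt.prodMk (hasDerivWithinAt_id s S) (hq s hs)
    have hG : HasDerivWithinAt (fun τ => m τ (q τ)) (f (1, u s (q s) + Γ)) S s :=
      by have := hmd.comp_hasDerivWithinAt s hpair; exact this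
    have h1 : HasDerivAt (fun τ => m τ (q s)) (f (1, 0)) s := by
      have hp : HasDerivAt (fun τ => (τ, q s)) ((1 : ℝ), (0 : ℝ)) s :=
        HasDerivAt.prodMk (hasDerivAt_id s) (hasDerivAt_const s (q s))
      exact hmd.comp_hasDerivAt s hp
    have h2 : HasDerivAt (m s) (f (0, 1)) (q s) := by
      have hp : HasDerivAt (fun y => (s, y)) ((0 : ℝ), (1 : ℝ)) (q s) :=
        HasDerivAt.prodMk (hasDerivAt_const (q s) s) (hasDerivAt_id (q s))
      exact hmd.comp_hasDerivAt (q s) hp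
    have key : f (1, 0) + (u s (q s) + Γ) * f (0, 1)
        + 2 * ux s (q s) * m s (q s) + lam * m s (q s) = D s := by
      have := heq s hs (q s)
      rwa [h1.deriv, h2.deriv] at this
    have hsplit : f (1, u s (q s) + Γ) = f (1, 0) + (u s (q s) + Γ) * f (0, 1) := by
      have : ((1 : ℝ), u s (q s) + Γ) = (1, 0) + (u s (q s) + Γ) • ((0 : ℝ), (1 : ℝ)) := by
        simp [Prod.ext_iff]
      rw [this, map_add, map_smul]
      simp [smul_eq_mul]
    have hE : HasDerivWithinAt (fun τ => Real.exp (lam * τ))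
        (Real.exp (lam * s) * lam) S s := by
      simpa using (((hasDerivAt_id s).const_mul lam).exp).hasDerivWithinAt
    have hW : HasDerivWithinAt (fun τ => (w τ) ^ 2)
        (2 * w s ^ 1 * (ux s (q s) * w s)) S s := (hw s hs).pow 2
    have htot := hE.mul (hG.mul hW)
    refine htot.congr_deriv ?_
    simp only [Pi.mul_apply]
    linear_combination (Real.exp (lam * s) * (w s) ^ 2) * key
      + (Real.exp (lam * s) * (w s) ^ 2) * hsplit
  have hIcc : Set.Icc (0:ℝ) t ⊆ S := by
    rintro y ⟨hy0, hyt⟩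
    exact ⟨hy0, lt_of_le_of_lt (by exact_mod_cast EReal.coe_le_coe_iff.mpr hyt) ht.2⟩
  have hFc : ContinuousOn F (Set.Icc 0 t) :=
    fun s hs => ((hF s (hIcc hs)).continuousWithinAt).mono hIcc
  have hderiv : ∀ s ∈ Set.Ioo (0:ℝ) t, HasDerivWithinAt F
      (Real.exp (lam * s) * (w s) ^ 2 * D s) (Set.Ioi s) s := by
    intro s hs
    have hmem : S ∈ nhds s := by
      rw [mem_nhds_iff]
      exact ⟨Set.Ioo 0 t, fun y hy => hIcc ⟨le_of_lt hy.1, le_of_lt hy.2⟩,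
        isOpen_Ioo, hs⟩
    exact ((hF s (hIcc ⟨le_of_lt hs.1, le_of_lt hs.2⟩)).hasDerivAt hmem).hasDerivWithinAt
  have hint : IntervalIntegrable (fun s => Real.exp (lam * s) * (w s) ^ 2 * D s)
      MeasureTheory.volume 0 t := by
    apply ContinuousOn.intervalIntegrable
    rw [Set.uIcc_of_le ht.1]
    exact hcont.mono hIcc
  have hFTC := intervalIntegral.integral_eq_sub_of_hasDeriv_right_of_le ht.1 hFc hderiv hint
  have hF0 : F 0 = m 0 x := by simp [hFdef, hq0, hw0]
  have hrw : ∀ s : ℝ, Real.exp (lam * (s - t)) * (w s) ^ 2 * D s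
      = Real.exp (-(lam * t)) * (Real.exp (lam * s) * (w s) ^ 2 * D s) := by
    intro s
    rw [mul_sub, sub_eq_add_neg, Real.exp_add]
    ring
  rw [show (fun s => Real.exp (lam * (s - t)) * (w s) ^ 2
        * deriv (fun y => hfun α β γ Γ (u s y)) (q s))
      = fun s => Real.exp (-(lam * t)) * (Real.exp (lam * s) * (w s) ^ 2 * D s) from funext hrw]
  rw [intervalIntegral.integral_const_mul, hFTC, hF0]
  have hexp : Real.exp (-(lam * t)) * Real.exp (lam * t) = 1 := by
    rw [← Real.exp_add]; simp
  have hFt : F t = Real.exp (lam * t) * (m t (q t) * (w t) ^ 2) := rfl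
  rw [hFt, neg_mul]
  linear_combination (-(m t (q t) * (w t) ^ 2)) * hexp
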